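/- Let (M,d,0) be a separable ultrametric space and let N ⊆ M be a finite subset with 0 ∈ N. Then there exists a linear projection P on F(M) with ‖P‖ ≤ 1 whose range is the linear span of {δ_M(x) : x ∈ N}; in particular, F(N) is 1-complemented in F(M). -/

import Mathlib

open scoped NNReal ENNReal
open Metric Filter

noncomputable section

/-- The space `Lip₀(M)` of real-valued Lipschitz functions on `M` vanishing at the
distinguished point `base`, as a submodule of `M → ℝ`. -/
def LipZero (M : Type*) [MetricSpace M] (base : M) : Submodule ℝ (M → ℝ) where
  carrier := {f | MemHolder 1 f ∧ f base = 0}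
  add_mem' := fun hf hg => ⟨hf.1.add hg.1, by simp [hf.2, hg.2]⟩
  zero_mem' := ⟨memHolder_zero, rfl⟩
  smul_mem' := fun c f hf => ⟨hf.1.smul, by simp [hf.2]⟩

variable {M : Type*} [MetricSpace M] {base : M}

lemma LipZero.memHolder (f : LipZero M base) : MemHolder 1 (f : M → ℝ) := f.2.1

lemma LipZero.base_eq_zero (f : LipZero M base) : (f : M → ℝ) base = 0 := f.2.2

lemma LipZero.lipschitzWith (f : LipZero M base) :
    LipschitzWith (nnHolderNorm 1 (f : M → ℝ)) (f : M → ℝ) :=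
  holderWith_one.mp f.2.1.holderWith

/-- The norm on `Lip₀(M)`: the optimal Lipschitz constant. -/
noncomputable instance LipZero.normedAddCommGroup : NormedAddCommGroup (LipZero M base) :=
  AddGroupNorm.toNormedAddCommGroup
    { toFun := fun f => nnHolderNorm 1 (f : M → ℝ)
      map_zero' := by simp
      add_le' := fun f g => by
        have := (LipZero.memHolder f).nnHolderNorm_add_le (LipZero.memHolder g)
        exact_mod_cast this
      neg' := fun f => by
        show (nnHolderNorm 1 ((-f : LipZero M base) : M → ℝ) : ℝ) = _
        have h : ((-f : LipZero M base) : M → ℝ) = (-1 : ℝ) • (f : M → ℝ) := by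
          simp
        rw [h, (LipZero.memHolder f).nnHolderNorm_smul ((-1 : ℝ))]
        simp
      eq_zero_of_map_eq_zero' := fun f hf => by
        have hf' : (nnHolderNorm 1 (f : M → ℝ) : ℝ) = 0 := hf
        have h0 : nnHolderNorm 1 (f : M → ℝ) = 0 := by exact_mod_cast hf'
        have hconst := ((LipZero.memHolder f).nnHolderNorm_eq_zero).mp h0
        have : ∀ x, (f : M → ℝ) x = 0 := fun x =>
          (hconst x base).trans (LipZero.base_eq_zero f)
        exact Subtype.ext (funext this) }

lemma LipZero.norm_def (f : LipZero M base) :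
    ‖f‖ = (nnHolderNorm 1 (f : M → ℝ) : ℝ) := rfl

noncomputable instance LipZero.normedSpace : NormedSpace ℝ (LipZero M base) where
  norm_smul_le c f := by
    have : ((c • f : LipZero M base) : M → ℝ) = c • (f : M → ℝ) := rfl
    rw [LipZero.norm_def, LipZero.norm_def, this, (LipZero.memHolder f).nnHolderNorm_smul c]
    push_cast
    simp [norm_smul]

lemma LipZero.dist_le (f : LipZero M base) (x y : M) :
    dist ((f : M → ℝ) x) ((f : M → ℝ) y) ≤ ‖f‖ * dist x y :=
  (LipZero.lipschitzWith f).dist_le_mul x y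

/-- The topological dual `E →L[𝕜] 𝕜`, with the norm topology on `E` (old Mathlib's
`NormedSpace.Dual`). -/
def NormedSpace.Dual (𝕜 : Type*) [NontriviallyNormedField 𝕜] (E : Type*)
    [SeminormedAddCommGroup E] [NormedSpace 𝕜 E] : Type _ := E →L[𝕜] 𝕜

instance NormedSpace.Dual.instSeminormedAddCommGroup (𝕜 : Type*) [NontriviallyNormedField 𝕜]
    (E : Type*) [SeminormedAddCommGroup E] [NormedSpace 𝕜 E] :
    SeminormedAddCommGroup (NormedSpace.Dual 𝕜 E) :=
  inferInstanceAs (SeminormedAddCommGroup (E →L[𝕜] 𝕜))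

instance NormedSpace.Dual.instNormedSpace (𝕜 : Type*) [NontriviallyNormedField 𝕜]
    (E : Type*) [SeminormedAddCommGroup E] [NormedSpace 𝕜 E] :
    NormedSpace 𝕜 (NormedSpace.Dual 𝕜 E) :=
  inferInstanceAs (NormedSpace 𝕜 (E →L[𝕜] 𝕜))

instance NormedSpace.Dual.instCompleteSpace (𝕜 : Type*) [NontriviallyNormedField 𝕜]
    [CompleteSpace 𝕜] (E : Type*) [SeminormedAddCommGroup E] [NormedSpace 𝕜 E] :
    CompleteSpace (NormedSpace.Dual 𝕜 E) :=
  inferInstanceAs (CompleteSpace (E →L[𝕜] 𝕜))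

variable (M base) in
/-- The Dirac map `δ : M → Lip₀(M)*`. -/
noncomputable def freeDelta (x : M) : NormedSpace.Dual ℝ (LipZero M base) :=
  LinearMap.mkContinuous
    { toFun := fun f => (f : M → ℝ) x
      map_add' := fun f g => rfl
      map_smul' := fun c f => rfl }
    (dist x base)
    (fun f => by
      have h := LipZero.dist_le f x base
      rw [LipZero.base_eq_zero f, dist_zero_right] at h
      simpa [mul_comm] using h)

variable (M base) in
/-- The Lipschitz-free space `F(M)`: the closed linear span of the Dirac measures
inside `Lip₀(M)*`. -/
noncomputable def FreeSpace : Submodule ℝ (NormedSpace.Dual ℝ (LipZero M base)) :=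
  (Submodule.span ℝ (Set.range (freeDelta M base))).topologicalClosure

variable (M base) in
/-- The Dirac map, viewed as a map into the free space `F(M)`. -/
noncomputable def freeDeltaF (x : M) : FreeSpace M base :=
  ⟨freeDelta M base x,
    Submodule.le_topologicalClosure _ (Submodule.subset_span ⟨x, rfl⟩)⟩

instance : CompleteSpace (FreeSpace M base) :=
  (Submodule.isClosed_topologicalClosure _).completeSpace_coe


instance NormedSpace.Dual.instFunLikeAux (𝕜 : Type*) [NontriviallyNormedField 𝕜] (E : Type*)
    [SeminormedAddCommGroup E] [NormedSpace 𝕜 E] : FunLike (NormedSpace.Dual 𝕜 E) E 𝕜 :=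
  inferInstanceAs (FunLike (E →L[𝕜] 𝕜) E 𝕜)

instance NormedSpace.Dual.instT2SpaceAux (𝕜 : Type*) [NontriviallyNormedField 𝕜] (E : Type*)
    [SeminormedAddCommGroup E] [NormedSpace 𝕜 E] : T2Space (NormedSpace.Dual 𝕜 E) :=
  inferInstanceAs (T2Space (E →L[𝕜] 𝕜))

instance NormedSpace.Dual.instNormedAddCommGroupAux (𝕜 : Type*) [NontriviallyNormedField 𝕜]
    (E : Type*) [NormedAddCommGroup E] [NormedSpace 𝕜 E] :
    NormedAddCommGroup (NormedSpace.Dual 𝕜 E) :=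
  inferInstanceAs (NormedAddCommGroup (E →L[𝕜] 𝕜))

@[ext]
theorem NormedSpace.Dual.extAux {𝕜 : Type*} [NontriviallyNormedField 𝕜] {E : Type*}
    [SeminormedAddCommGroup E] [NormedSpace 𝕜 E] {f g : NormedSpace.Dual 𝕜 E}
    (h : ∀ x, f x = g x) : f = g :=
  ContinuousLinearMap.ext h

noncomputable section Retract

variable {M : Type*} [MetricSpace M]

private lemma wfmin_congr {α : Type*} {r : α → α → Prop} (wf : WellFounded r) {s t : Set α}
    (h : s = t) (hs : s.Nonempty) (ht : t.Nonempty) : wf.min s hs = wf.min t ht := by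
  subst h; rfl

/-- Canonical nearest-point retraction onto a nonempty finite set. -/
noncomputable def uRetract (s : Finset M) (hne : s.Nonempty) (x : M) : M :=
  (IsWellFounded.wf (r := (WellOrderingRel : M → M → Prop))).min
    {a | a ∈ s ∧ dist x a = s.inf' hne (fun b => dist x b)}
    (by
      obtain ⟨a, ha, hd⟩ := Finset.exists_mem_eq_inf' hne (fun b => dist x b)
      exact ⟨a, ha, hd.symm⟩)

lemma uRetract_spec (s : Finset M) (hne : s.Nonempty) (x : M) :
    uRetract s hne x ∈ s ∧ dist x (uRetract s hne x) = s.inf' hne (fun b => dist x b) := by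
  have h := (IsWellFounded.wf (r := (WellOrderingRel : M → M → Prop))).min_mem
    {a | a ∈ s ∧ dist x a = s.inf' hne (fun b => dist x b)}
    (by
      obtain ⟨a, ha, hd⟩ := Finset.exists_mem_eq_inf' hne (fun b => dist x b)
      exact ⟨a, ha, hd.symm⟩)
  exact h

lemma uRetract_mem (s : Finset M) (hne : s.Nonempty) (x : M) : uRetract s hne x ∈ s :=
  (uRetract_spec s hne x).1

lemma uRetract_dist (s : Finset M) (hne : s.Nonempty) (x : M) :
    dist x (uRetract s hne x) = s.inf' hne (fun b => dist x b) :=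
  (uRetract_spec s hne x).2

lemma uRetract_inf_le (s : Finset M) (hne : s.Nonempty) (x : M) {a : M} (ha : a ∈ s) :
    dist x (uRetract s hne x) ≤ dist x a := by
  rw [uRetract_dist]; exact Finset.inf'_le _ ha

lemma uRetract_eq_self (s : Finset M) (hne : s.Nonempty) {x : M} (hx : x ∈ s) :
    uRetract s hne x = x := by
  have h0 : dist x (uRetract s hne x) = 0 :=
    le_antisymm (by simpa using uRetract_inf_le s hne x hx) dist_nonneg
  rw [dist_comm, dist_eq_zero] at h0
  exact h0

lemma uRetract_dist_le (hU : ∀ x y z : M, dist x z ≤ max (dist x y) (dist y z))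
    (s : Finset M) (hne : s.Nonempty) (x y : M) :
    dist (uRetract s hne x) (uRetract s hne y) ≤ dist x y := by
  -- helper: one-sided case
  have key : ∀ x y : M, dist x (uRetract s hne x) ≤ dist x y →
      dist (uRetract s hne x) (uRetract s hne y) ≤ dist x y := by
    intro x y hx
    have hy : dist y (uRetract s hne y) ≤ dist x y := by
      refine le_trans (uRetract_inf_le s hne y (uRetract_mem s hne x)) ?_
      refine le_trans (hU y x (uRetract s hne x)) ?_
      simp only [max_le_iff]
      exact ⟨le_of_eq (dist_comm y x), hx⟩
    refine le_trans (hU (uRetract s hne x) x (uRetract s hne y)) ?_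
    simp only [max_le_iff]
    refine ⟨le_trans (le_of_eq (dist_comm _ _)) hx, ?_⟩
    refine le_trans (hU x y (uRetract s hne y)) ?_
    simp [hy]
  rcases le_or_gt (dist x (uRetract s hne x)) (dist x y) with hx | hx
  · exact key x y hx
  rcases le_or_gt (dist y (uRetract s hne y)) (dist x y) with hy | hy
  · rw [dist_comm x y] at hy
    rw [dist_comm, dist_comm x y]
    exact key y x hy
  · -- both strictly larger: minimizer sets coincide
    have hyx : dist y x = dist x y := dist_comm y x
    have hxy' : dist x y < dist y (uRetract s hne y) := hy
    have hle1 : dist x (uRetract s hne x) ≤ dist y (uRetract s hne y) := by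
      refine le_trans (uRetract_inf_le s hne x (uRetract_mem s hne y)) ?_
      refine le_trans (hU x y (uRetract s hne y)) ?_
      exact max_le (le_of_lt hxy') le_rfl
    have hle2 : dist y (uRetract s hne y) ≤ dist x (uRetract s hne x) := by
      refine le_trans (uRetract_inf_le s hne y (uRetract_mem s hne x)) ?_
      refine le_trans (hU y x (uRetract s hne x)) ?_
      exact max_le (hyx ▸ le_of_lt hx) le_rfl
    have heq : dist x (uRetract s hne x) = dist y (uRetract s hne y) := le_antisymm hle1 hle2
    have hIx : s.inf' hne (fun b => dist x b) = dist x (uRetract s hne x) :=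
      (uRetract_dist s hne x).symm
    have hIy : s.inf' hne (fun b => dist y b) = dist y (uRetract s hne y) :=
      (uRetract_dist s hne y).symm
    have hsets : {a | a ∈ s ∧ dist x a = s.inf' hne (fun b => dist x b)} =
        {a | a ∈ s ∧ dist y a = s.inf' hne (fun b => dist y b)} := by
      ext a
      simp only [Set.mem_setOf_eq, hIx, hIy]
      constructor
      · rintro ⟨has, hda⟩
        refine ⟨has, le_antisymm ?_ ?_⟩
        · refine le_trans (hU y x a) (max_le ?_ ?_)
          · exact hyx ▸ le_of_lt hy
          · rw [hda, heq]
        · rw [← hIy]; exact Finset.inf'_le _ has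
      · rintro ⟨has, hda⟩
        refine ⟨has, le_antisymm ?_ ?_⟩
        · refine le_trans (hU x y a) (max_le ?_ ?_)
          · exact le_of_lt hx
          · rw [hda, ← heq]
        · rw [← hIx]; exact Finset.inf'_le _ has
    have : uRetract s hne x = uRetract s hne y := wfmin_congr _ hsets _ _
    rw [this, dist_self]
    exact dist_nonneg

end Retract
section Ops

variable {M' : Type*} [MetricSpace M'] {base' : M'}

/-- Precomposition with a 1-Lipschitz base-point-preserving map, as a linear map
`Lip₀(M) → Lip₀(M')`. -/
noncomputable def compLipAux (φ : M' → M) (hφ : LipschitzWith 1 φ) (hb : φ base' = base) :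
    LipZero M base →ₗ[ℝ] LipZero M' base' where
  toFun f := ⟨(f : M → ℝ) ∘ φ,
    ⟨(holderWith_one.mpr ((LipZero.lipschitzWith f).comp hφ)).memHolder, by
      simp only [Function.comp_apply, hb]
      exact LipZero.base_eq_zero f⟩⟩
  map_add' f g := rfl
  map_smul' c f := rfl

lemma compLipAux_norm_le (φ : M' → M) (hφ : LipschitzWith 1 φ) (hb : φ base' = base)
    (f : LipZero M base) : ‖compLipAux φ hφ hb f‖ ≤ ‖f‖ := by
  rw [LipZero.norm_def, LipZero.norm_def]
  have h : HolderWith (nnHolderNorm 1 (f : M → ℝ) * 1) 1 ((f : M → ℝ) ∘ φ) :=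
    holderWith_one.mpr ((LipZero.lipschitzWith f).comp hφ)
  have := h.nnholderNorm_le
  rw [mul_one] at this
  exact_mod_cast this

/-- Precomposition as a continuous linear map of norm at most `1`. -/
noncomputable def compLip (φ : M' → M) (hφ : LipschitzWith 1 φ) (hb : φ base' = base) :
    @ContinuousLinearMap ℝ ℝ _ _ (RingHom.id ℝ) (LipZero M base)
      (@UniformSpace.toTopologicalSpace _ PseudoMetricSpace.toUniformSpace) _ (LipZero M' base')
      (@UniformSpace.toTopologicalSpace _ PseudoMetricSpace.toUniformSpace) _ _ _ :=
  LinearMap.mkContinuous (compLipAux φ hφ hb) 1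
    (fun f => by rw [one_mul]; exact compLipAux_norm_le φ hφ hb f)

lemma compLip_apply (φ : M' → M) (hφ : LipschitzWith 1 φ) (hb : φ base' = base)
    (f : LipZero M base) (z : M') : (compLip φ hφ hb f : M' → ℝ) z = (f : M → ℝ) (φ z) := rfl

lemma compLip_norm_le (φ : M' → M) (hφ : LipschitzWith 1 φ) (hb : φ base' = base)
    (f : LipZero M base) : ‖compLip φ hφ hb f‖ ≤ ‖f‖ :=
  compLipAux_norm_le φ hφ hb f

/-- The adjoint of a norm-nonincreasing operator, acting on duals. -/
noncomputable def precompDual {X Y : Type*} [NormedAddCommGroup X] [NormedSpace ℝ X]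
    [NormedAddCommGroup Y] [NormedSpace ℝ Y] (T : X →L[ℝ] Y) (hT : ∀ f, ‖T f‖ ≤ ‖f‖) :
    NormedSpace.Dual ℝ Y →L[ℝ] NormedSpace.Dual ℝ X :=
  LinearMap.mkContinuous
    { toFun := fun μ => μ.comp T
      map_add' := fun μ ν => by ext f; rfl
      map_smul' := fun c μ => by ext f; rfl }
    1
    (fun μ => by
      rw [one_mul]
      refine ContinuousLinearMap.opNorm_le_bound _ (norm_nonneg μ) fun f => ?_
      calc ‖μ (T f)‖ ≤ ‖μ‖ * ‖T f‖ := μ.le_opNorm _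
        _ ≤ ‖μ‖ * ‖f‖ := mul_le_mul_of_nonneg_left (hT f) (norm_nonneg μ))

lemma precompDual_apply {X Y : Type*} [NormedAddCommGroup X] [NormedSpace ℝ X]
    [NormedAddCommGroup Y] [NormedSpace ℝ Y] (T : X →L[ℝ] Y) (hT : ∀ f, ‖T f‖ ≤ ‖f‖)
    (μ : NormedSpace.Dual ℝ Y) (f : X) : precompDual T hT μ f = μ (T f) := rfl

lemma precompDual_norm_le {X Y : Type*} [NormedAddCommGroup X] [NormedSpace ℝ X]
    [NormedAddCommGroup Y] [NormedSpace ℝ Y] (T : X →L[ℝ] Y) (hT : ∀ f, ‖T f‖ ≤ ‖f‖)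
    (μ : NormedSpace.Dual ℝ Y) : ‖precompDual T hT μ‖ ≤ ‖μ‖ := by
  refine ContinuousLinearMap.opNorm_le_bound _ (norm_nonneg μ) fun f => ?_
  calc ‖μ (T f)‖ ≤ ‖μ‖ * ‖T f‖ := μ.le_opNorm _
    _ ≤ ‖μ‖ * ‖f‖ := mul_le_mul_of_nonneg_left (hT f) (norm_nonneg μ)

end Ops
set_option maxHeartbeats 2000000 in
/-- **(Remark: finite subsets are 1-complemented).** Let `M` be a separable ultrametric
space with distinguished point `base` and `N ⊆ M` a finite subset containing `base`. Then
there is a linear projection `P` on `F(M)` with `‖P‖ ≤ 1` whose range is the linear span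
of `{δ_M(x) : x ∈ N}`; in particular `F(N)` is `1`-complemented in `F(M)`. -/
theorem freeSpace_finite_subset_one_complemented
    (M : Type*) [MetricSpace M] [TopologicalSpace.SeparableSpace M]
    (hU : ∀ x y z : M, dist x z ≤ max (dist x y) (dist y z)) (base : M)
    (N : Set M) (hNfin : N.Finite) (hbase : base ∈ N) :
    ∃ P : FreeSpace M base →L[ℝ] FreeSpace M base,
      ‖P‖ ≤ 1 ∧
      (∀ v : FreeSpace M base, P (P v) = P v) ∧
      LinearMap.range (P : FreeSpace M base →ₗ[ℝ] FreeSpace M base) =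
        Submodule.span ℝ (freeDeltaF M base '' N) ∧
      Nonempty
        ((Submodule.span ℝ (freeDeltaF M base '' N)) ≃ₗᵢ[ℝ]
          FreeSpace N (⟨base, hbase⟩ : N)) := by
  classical
  haveI := hNfin.to_subtype
  set s : Finset M := hNfin.toFinset with hs
  have hbs : base ∈ s := hNfin.mem_toFinset.mpr hbase
  have hne : s.Nonempty := ⟨base, hbs⟩
  set r : M → M := uRetract s hne with hrdef
  have hrN : ∀ x, r x ∈ N := fun x => hNfin.mem_toFinset.mp (uRetract_mem s hne x)
  have hrfix : ∀ x ∈ N, r x = x := fun x hx =>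
    uRetract_eq_self s hne (hNfin.mem_toFinset.mpr hx)
  have hrlip : LipschitzWith 1 r := LipschitzWith.of_dist_le_mul fun x y => by
    simpa using uRetract_dist_le hU s hne x y
  have hrbase : r base = base := hrfix base hbase
  set Tr := compLip r hrlip hrbase with hTrdef
  have hTr : ∀ f, ‖Tr f‖ ≤ ‖f‖ := compLip_norm_le r hrlip hrbase
  set P₀ := precompDual Tr hTr with hP₀def
  have hP₀δ : ∀ x : M, P₀ (freeDelta M base x) = freeDelta M base (r x) := fun x => rfl
  set K := Submodule.span ℝ (freeDelta M base '' N) with hKdef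
  haveI hKfd : FiniteDimensional ℝ K := FiniteDimensional.span_of_finite ℝ (hNfin.image _)
  have hKclosed : IsClosed (K : Set (NormedSpace.Dual ℝ (LipZero M base))) :=
    Submodule.closed_of_finiteDimensional K
  have hvmem : ∀ v : NormedSpace.Dual ℝ (LipZero M base), v ∈ FreeSpace M base →
      v ∈ closure ((Submodule.span ℝ (Set.range (freeDelta M base)) : Submodule ℝ _) : Set _) := by
    intro v hv
    rw [← Submodule.topologicalClosure_coe]
    exact hv
  have hspanK : ∀ u ∈ Submodule.span ℝ (Set.range (freeDelta M base)), P₀ u ∈ K := by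
    intro u hu
    refine Submodule.span_induction ?_ ?_ ?_ ?_ hu
    · rintro _ ⟨x, rfl⟩
      rw [hP₀δ]
      exact Submodule.subset_span ⟨r x, hrN x, rfl⟩
    · rw [map_zero]; exact Submodule.zero_mem K
    · intro a b _ _ ha hb; rw [map_add]; exact Submodule.add_mem K ha hb
    · intro c a _ ha; rw [map_smul]; exact Submodule.smul_mem K c ha
  have hP₀mem : ∀ v : NormedSpace.Dual ℝ (LipZero M base), v ∈ FreeSpace M base → P₀ v ∈ K := by
    intro v hv
    have h1 : P₀ v ∈ closure (P₀ '' ((Submodule.span ℝ (Set.range (freeDelta M base))) : Set _)) :=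
      image_closure_subset_closure_image P₀.continuous ⟨v, hvmem v hv, rfl⟩
    have h2 := closure_mono (fun w hw => by
      obtain ⟨u, hu, rfl⟩ := hw
      exact hspanK u hu) h1
    rwa [hKclosed.closure_eq] at h2
  have hKsub : K ≤ FreeSpace M base := Submodule.span_le.mpr (by
    rintro w ⟨x, hx, rfl⟩
    exact (freeDeltaF M base x).2)
  set Pl : FreeSpace M base →ₗ[ℝ] FreeSpace M base :=
    { toFun := fun v => ⟨P₀ ↑v, hKsub (hP₀mem ↑v v.2)⟩
      map_add' := fun u v => Subtype.ext (map_add P₀ _ _)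
      map_smul' := fun c v => Subtype.ext (map_smul P₀ c _) } with hPldef
  set P : FreeSpace M base →L[ℝ] FreeSpace M base :=
    Pl.mkContinuous 1 (fun v => by
      rw [one_mul]
      show ‖P₀ ↑v‖ ≤ ‖(v : NormedSpace.Dual ℝ (LipZero M base))‖
      exact precompDual_norm_le Tr hTr _) with hPdef
  have hPapply : ∀ v : FreeSpace M base, (P v : NormedSpace.Dual ℝ (LipZero M base)) = P₀ ↑v :=
    fun v => rfl
  have hmapS : Submodule.map (FreeSpace M base).subtype
      (Submodule.span ℝ (freeDeltaF M base '' N)) = K := by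
    rw [Submodule.map_span, Set.image_image]
    rfl
  refine ⟨P, ?_, ?_, ?_, ?_⟩
  · exact LinearMap.mkContinuous_norm_le _ zero_le_one _
  · intro v
    apply Subtype.ext
    rw [hPapply, hPapply]
    have hclosed : IsClosed {w : NormedSpace.Dual ℝ (LipZero M base) | P₀ (P₀ w) = P₀ w} :=
      isClosed_eq (P₀.continuous.comp P₀.continuous) P₀.continuous
    have hsub2 : ((Submodule.span ℝ (Set.range (freeDelta M base))) : Set _) ⊆
        {w | P₀ (P₀ w) = P₀ w} := by
      intro u hu
      refine Submodule.span_induction ?_ ?_ ?_ ?_ hu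
      · rintro _ ⟨x, rfl⟩
        show P₀ (P₀ (freeDelta M base x)) = P₀ (freeDelta M base x)
        rw [hP₀δ, hP₀δ, hrfix (r x) (hrN x)]
      · show P₀ (P₀ 0) = P₀ 0
        simp
      · intro a b _ _ ha hb
        show P₀ (P₀ (a + b)) = P₀ (a + b)
        rw [map_add, map_add, ha, hb]
      · intro c a _ ha
        show P₀ (P₀ (c • a)) = P₀ (c • a)
        rw [map_smul, map_smul, ha]
    exact closure_minimal hsub2 hclosed (hvmem ↑v v.2)
  · apply le_antisymm
    · rintro w ⟨v, rfl⟩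
      have h : (FreeSpace M base).subtype (P v) ∈ Submodule.map (FreeSpace M base).subtype
          (Submodule.span ℝ (freeDeltaF M base '' N)) := by
        rw [hmapS]
        exact hP₀mem ↑v v.2
      obtain ⟨y, hy, hyy⟩ := h
      have hyv : y = P v := Subtype.ext hyy
      rwa [hyv] at hy
    · rw [Submodule.span_le]
      rintro w ⟨x, hx, rfl⟩
      refine ⟨freeDeltaF M base x, ?_⟩
      refine Subtype.ext ?_
      show P₀ (freeDelta M base x) = freeDelta M base x
      rw [hP₀δ, hrfix x hx]
  · -- the isometry with F(N)
    set base' : N := ⟨base, hbase⟩ with hbase'def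
    set R := compLip (M := M) (base := base) (M' := ↥N) (base' := base')
      Subtype.val (LipschitzWith.subtype_val N) rfl with hRdef
    have hR : ∀ f, ‖R f‖ ≤ ‖f‖ := compLip_norm_le _ _ _
    set A := precompDual R hR with hAdef
    have hAδ : ∀ z : ↥N, A (freeDelta ↥N base' z) = freeDelta M base ↑z := fun z => rfl
    have hsurj : ∀ g : LipZero ↥N base', ∃ f : LipZero M base, R f = g ∧ ‖f‖ ≤ ‖g‖ := by
      intro g
      set C := nnHolderNorm 1 (g : ↥N → ℝ) with hCdef
      have hg : LipschitzWith C (g : ↥N → ℝ) := LipZero.lipschitzWith g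
      set g' : M → ℝ := fun x => if h : x ∈ N then (g : ↥N → ℝ) ⟨x, h⟩ else 0 with hg'def
      have hg'lip : LipschitzOnWith C g' N := by
        rw [lipschitzOnWith_iff_dist_le_mul]
        intro x hx y hy
        simp only [hg'def, dif_pos hx, dif_pos hy]
        have := hg.dist_le_mul ⟨x, hx⟩ ⟨y, hy⟩
        rwa [Subtype.dist_eq] at this
      obtain ⟨h, hl, he⟩ := hg'lip.extend_real
      have hb0 : h base = 0 := by
        rw [← he hbase]
        simp only [hg'def, dif_pos hbase]
        exact LipZero.base_eq_zero g
      refine ⟨⟨h, (holderWith_one.mpr hl).memHolder, hb0⟩, ?_, ?_⟩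
      · apply Subtype.ext
        funext z
        show h ↑z = (g : ↥N → ℝ) z
        rw [← he z.2]
        simp only [hg'def, dif_pos z.2]
      · show (nnHolderNorm 1 h : ℝ) ≤ (C : ℝ)
        exact_mod_cast (holderWith_one.mpr hl).nnholderNorm_le
    have hAiso : ∀ μ, ‖A μ‖ = ‖μ‖ := by
      intro μ
      refine le_antisymm (precompDual_norm_le R hR μ) ?_
      refine ContinuousLinearMap.opNorm_le_bound μ (norm_nonneg (A μ)) fun g => ?_
      obtain ⟨f, hf, hfn⟩ := hsurj g
      calc ‖μ g‖ = ‖A μ f‖ := by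
            rw [hAdef, precompDual_apply, hf]
        _ ≤ ‖A μ‖ * ‖f‖ := (A μ).le_opNorm f
        _ ≤ ‖A μ‖ * ‖g‖ := mul_le_mul_of_nonneg_left hfn (norm_nonneg _)
    have hAinj : Function.Injective A := by
      intro μ ν h
      have h0 : ‖μ - ν‖ = 0 := by
        rw [← hAiso (μ - ν), map_sub, h, sub_self, norm_zero]
      exact sub_eq_zero.mp (norm_eq_zero.mp h0)
    haveI : FiniteDimensional ℝ (Submodule.span ℝ (Set.range (freeDelta ↥N base'))) :=
      FiniteDimensional.span_of_finite ℝ (Set.finite_range _)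
    have hFN : FreeSpace ↥N base' = Submodule.span ℝ (Set.range (freeDelta ↥N base')) :=
      IsClosed.submodule_topologicalClosure_eq (Submodule.closed_of_finiteDimensional _)
    have hmapA : Submodule.map A.toLinearMap (FreeSpace ↥N base') = K := by
      rw [hFN, ← Set.image_univ, Submodule.map_span, Set.image_image]
      rw [show (fun z : ↥N => A.toLinearMap (freeDelta ↥N base' z)) = fun z : ↥N => freeDelta M base ↑z from
        funext hAδ]
      rw [show (fun z : ↥N => freeDelta M base ↑z) '' Set.univ = freeDelta M base '' N from by
        rw [← Set.image_image (freeDelta M base) (Subtype.val : ↥N → M), Subtype.coe_image_univ]]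
    set eS : (Submodule.span ℝ (freeDeltaF M base '' N)) ≃ₗ[ℝ] K :=
      (Submodule.equivMapOfInjective (FreeSpace M base).subtype
        (Submodule.injective_subtype _) _).trans (LinearEquiv.ofEq _ _ hmapS) with heSdef
    set eFN : FreeSpace ↥N base' ≃ₗ[ℝ] K :=
      (Submodule.equivMapOfInjective A.toLinearMap hAinj _).trans (LinearEquiv.ofEq _ _ hmapA) with heFNdef
    set efinal := eS.trans eFN.symm with hefinaldef
    have hnorm : ∀ v, ‖efinal v‖ = ‖v‖ := by
      intro v
      have h2 : eFN (efinal v) = eS v := by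
        rw [hefinaldef]
        exact eFN.apply_symm_apply (eS v)
      have h3 : ((eFN (efinal v) : K) : NormedSpace.Dual ℝ (LipZero M base)) =
          A ↑(efinal v) := rfl
      have h4 : ((eS v : K) : NormedSpace.Dual ℝ (LipZero M base)) =
          ((v : FreeSpace M base) : NormedSpace.Dual ℝ (LipZero M base)) := rfl
      have h1 : A ↑(efinal v) = ((v : FreeSpace M base) : NormedSpace.Dual ℝ (LipZero M base)) := by
        rw [← h3, h2, h4]
      calc ‖efinal v‖ = ‖(↑(efinal v) : NormedSpace.Dual ℝ (LipZero ↥N base'))‖ := rfl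
        _ = ‖A ↑(efinal v)‖ := (hAiso _).symm
        _ = ‖((v : FreeSpace M base) : NormedSpace.Dual ℝ (LipZero M base))‖ := by rw [h1]
        _ = ‖v‖ := rfl
    exact ⟨⟨efinal, hnorm⟩⟩

end
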